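/- For d = 3, the expected Euler characteristic curve per site of the random cubical complex, f_3(p) = Σ_{k=0}^3 (-1)^k (3 choose k) (1 - (1-p)^(2^(3-k))), has exactly two zeros in the open interval (0,1). -/

import Mathlib

/-- The expected Euler characteristic curve per site of the `d`-dimensional random
cubical site-percolation model on the flat torus:
`f_d(p) = Σ_{k=0}^d (-1)^k (d choose k) (1 - (1-p)^(2^(d-k)))`. -/
noncomputable def cubicalECCurve (d : ℕ) (p : ℝ) : ℝ :=
  ∑ k ∈ Finset.range (d + 1),
    (-1 : ℝ) ^ k * (d.choose k) * (1 - (1 - p) ^ (2 ^ (d - k)))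

private def Hf (p : ℝ) : ℝ := 1 - 12*p + 32*p^2 - 35*p^3 + 21*p^4 - 7*p^5 + p^6
private def H1f (p : ℝ) : ℝ := -12 + 64*p - 105*p^2 + 84*p^3 - 35*p^4 + 6*p^5
private def H2f (p : ℝ) : ℝ := 64 - 210*p + 252*p^2 - 140*p^3 + 30*p^4

private lemma factorEC (p : ℝ) : cubicalECCurve 3 p = p * (1 - p) * Hf p := by
  simp [cubicalECCurve, Finset.sum_range_succ, Hf]
  ring

private lemma hasDeriv_Hf (p : ℝ) : HasDerivAt Hf (H1f p) p := by
  have h : HasDerivAt (fun x : ℝ =>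
      1 - 12*x + 32*x^2 - 35*x^3 + 21*x^4 - 7*x^5 + x^6)
      (-12 + 64*p - 105*p^2 + 84*p^3 - 35*p^4 + 6*p^5) p := by
    have h1 := (hasDerivAt_id p).const_mul (12 : ℝ)
    have h2 := (hasDerivAt_pow 2 p).const_mul (32 : ℝ)
    have h3 := (hasDerivAt_pow 3 p).const_mul (35 : ℝ)
    have h4 := (hasDerivAt_pow 4 p).const_mul (21 : ℝ)
    have h5 := (hasDerivAt_pow 5 p).const_mul (7 : ℝ)
    have h6 := hasDerivAt_pow 6 p
    have := (((((((hasDerivAt_const p (1:ℝ)).sub h1).add h2).sub h3).add h4).sub h5).add h6)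
    refine this.congr_deriv ?_
    push_cast
    ring
  exact h

private lemma hasDeriv_H1f (p : ℝ) : HasDerivAt H1f (H2f p) p := by
  have h : HasDerivAt (fun x : ℝ =>
      -12 + 64*x - 105*x^2 + 84*x^3 - 35*x^4 + 6*x^5)
      (64 - 210*p + 252*p^2 - 140*p^3 + 30*p^4) p := by
    have h1 := (hasDerivAt_id p).const_mul (64 : ℝ)
    have h2 := (hasDerivAt_pow 2 p).const_mul (105 : ℝ)
    have h3 := (hasDerivAt_pow 3 p).const_mul (84 : ℝ)
    have h4 := (hasDerivAt_pow 4 p).const_mul (35 : ℝ)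
    have h5 := (hasDerivAt_pow 5 p).const_mul (6 : ℝ)
    have := ((((((hasDerivAt_const p (-12:ℝ)).add h1).sub h2).add h3).sub h4).add h5)
    refine this.congr_deriv ?_
    push_cast
    ring
  exact h

private lemma contHf : Continuous Hf := by
  unfold Hf; fun_prop

private lemma contH1f : Continuous H1f := by
  unfold H1f; fun_prop

private lemma H2f_pos {p : ℝ} (h0 : 0 < p) (h1 : p < 2/3) : 0 < H2f p := by
  unfold H2f
  nlinarith [sq_nonneg (p - 1/2), sq_nonneg (p - 2/3), sq_nonneg p,
    mul_pos h0 (sub_pos.mpr h1), sq_nonneg (p*(p-1/2)), sq_nonneg (p*(p-2/3)),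
    sq_nonneg (p^2 - p), mul_pos (mul_pos h0 h0) (sub_pos.mpr h1)]

private lemma H1f_pos_right {p : ℝ} (h0 : 2/3 < p) (h1 : p < 1) : 0 < H1f p := by
  unfold H1f
  nlinarith [sq_nonneg (p - 2/3), sq_nonneg (p - 1), mul_pos (sub_pos.mpr h0) (sub_pos.mpr h1),
    sq_nonneg (p - 5/6), mul_pos (mul_pos (sub_pos.mpr h0) (sub_pos.mpr h0)) (sub_pos.mpr h1),
    mul_pos (sub_pos.mpr h0) (mul_pos (sub_pos.mpr h1) (sub_pos.mpr h1))]

private lemma H1f_strictMono : StrictMonoOn H1f (Set.Icc 0 (2/3)) := by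
  apply strictMonoOn_of_deriv_pos (convex_Icc _ _) contH1f.continuousOn
  intro x hx
  rw [interior_Icc] at hx
  rw [(hasDeriv_H1f x).deriv]
  exact H2f_pos hx.1 hx.2

/-- For `d = 3`, the expected Euler characteristic curve per site of the random
cubical complex has exactly two zeros in the open interval `(0,1)`. -/
theorem cubical_ec_curve_zeros_dim_three :
    {p : ℝ | p ∈ Set.Ioo (0 : ℝ) 1 ∧ cubicalECCurve 3 p = 0}.encard = 2 := by
  -- find c : zero of H1f in (0, 1/2)
  have hH10 : H1f 0 < 0 := by norm_num [H1f]
  have hH1half : (0:ℝ) < H1f (1/2) := by norm_num [H1f]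
  obtain ⟨c, hc, hcz⟩ : ∃ c ∈ Set.Ioo (0:ℝ) (1/2), H1f c = 0 := by
    have := intermediate_value_Ioo (a := (0:ℝ)) (b := 1/2) (by norm_num)
      contH1f.continuousOn (f := H1f)
    have h0 : (0:ℝ) ∈ Set.Ioo (H1f 0) (H1f (1/2)) := ⟨hH10, hH1half⟩
    obtain ⟨c, hc, hcz⟩ := this h0
    exact ⟨c, hc, hcz⟩
  have hc23 : c < 2/3 := lt_trans hc.2 (by norm_num)
  -- H1f negative on (0,c), positive on (c,1)
  have hIccc : c ∈ Set.Icc (0:ℝ) (2/3) := ⟨le_of_lt hc.1, le_of_lt hc23⟩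
  have hneg : ∀ x ∈ Set.Ioo (0:ℝ) c, H1f x < 0 := by
    intro x hx
    have := H1f_strictMono ⟨le_of_lt hx.1, le_of_lt (lt_trans hx.2 hc23)⟩ hIccc hx.2
    linarith [hcz ▸ this]
  have hpos : ∀ x ∈ Set.Ioo c 1, 0 < H1f x := by
    intro x hx
    by_cases hx23 : x ≤ 2/3
    · have := H1f_strictMono hIccc ⟨le_trans (le_of_lt hc.1) (le_of_lt hx.1), hx23⟩ hx.1
      linarith [hcz ▸ this]
    · exact H1f_pos_right (lt_of_not_ge hx23) hx.2
  -- H strictly anti on [0, c], strictly mono on [c, 1]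
  have hanti : StrictAntiOn Hf (Set.Icc 0 c) := by
    apply strictAntiOn_of_deriv_neg (convex_Icc _ _) contHf.continuousOn
    intro x hx
    rw [interior_Icc] at hx
    rw [(hasDeriv_Hf x).deriv]
    exact hneg x hx
  have hmono : StrictMonoOn Hf (Set.Icc c 1) := by
    apply strictMonoOn_of_deriv_pos (convex_Icc _ _) contHf.continuousOn
    intro x hx
    rw [interior_Icc] at hx
    rw [(hasDeriv_Hf x).deriv]
    exact hpos x hx
  -- values
  have hHf0 : Hf 0 = 1 := by norm_num [Hf]
  have hHf1 : Hf 1 = 1 := by norm_num [Hf]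
  have hHfhalf : Hf (1/2) < 0 := by norm_num [Hf]
  have hHfc : Hf c < 0 := by
    have : Hf c < Hf (1/2) :=
      hmono ⟨le_refl c, le_trans (le_of_lt hc.2) (by norm_num)⟩
        ⟨le_of_lt hc.2, by norm_num⟩ hc.2
    linarith
  -- two zeros of Hf
  obtain ⟨a, ha, haz⟩ : ∃ a ∈ Set.Ioo (0:ℝ) c, Hf a = 0 := by
    have := intermediate_value_Ioo' (a := (0:ℝ)) (b := c) (le_of_lt hc.1)
      contHf.continuousOn (f := Hf)
    have h0 : (0:ℝ) ∈ Set.Ioo (Hf c) (Hf 0) := ⟨hHfc, by rw [hHf0]; norm_num⟩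
    obtain ⟨a, ha, haz⟩ := this h0
    exact ⟨a, ha, haz⟩
  obtain ⟨b, hb, hbz⟩ : ∃ b ∈ Set.Ioo c (1:ℝ), Hf b = 0 := by
    have := intermediate_value_Ioo (a := c) (b := (1:ℝ)) (le_of_lt (lt_trans hc.2 (by norm_num)))
      contHf.continuousOn (f := Hf)
    have h0 : (0:ℝ) ∈ Set.Ioo (Hf c) (Hf 1) := ⟨hHfc, by rw [hHf1]; norm_num⟩
    obtain ⟨b, hb, hbz⟩ := this h0
    exact ⟨b, hb, hbz⟩
  have hc1 : c < 1 := lt_trans hc.2 (by norm_num)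
  -- set equality
  have hset : {p : ℝ | p ∈ Set.Ioo (0 : ℝ) 1 ∧ cubicalECCurve 3 p = 0} = {a, b} := by
    ext p
    simp only [Set.mem_setOf_eq, Set.mem_insert_iff, Set.mem_singleton_iff]
    constructor
    · rintro ⟨⟨hp0, hp1⟩, hpz⟩
      rw [factorEC] at hpz
      have hHp : Hf p = 0 := by
        have h1 : p ≠ 0 := ne_of_gt hp0
        have h2 : (1 : ℝ) - p ≠ 0 := by linarith
        rcases mul_eq_zero.mp hpz with h | h
        · rcases mul_eq_zero.mp h with h' | h'
          · exact absurd h' h1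
          · exact absurd h' h2
        · exact h
      rcases le_or_gt p c with hpc | hpc
      · left
        exact hanti.injOn ⟨le_of_lt hp0, hpc⟩ ⟨le_of_lt ha.1, le_of_lt ha.2⟩ (by rw [hHp, haz])
      · right
        exact hmono.injOn ⟨le_of_lt hpc, le_of_lt hp1⟩ ⟨le_of_lt hb.1, le_of_lt hb.2⟩
          (by rw [hHp, hbz])
    · rintro (rfl | rfl)
      · exact ⟨⟨ha.1, lt_trans ha.2 hc1⟩, by rw [factorEC, haz]; ring⟩
      · exact ⟨⟨lt_trans hc.1 hb.1, hb.2⟩, by rw [factorEC, hbz]; ring⟩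
  rw [hset]
  exact Set.encard_pair (ne_of_lt (lt_trans ha.2 hb.1))
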